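/- Let n ≥ 2 and let a_1, …, a_n be integers with a_i ≥ 2. Set D = ∏_{k=1}^{n} a_k + (−1)^{n+1} and define, for 1 ≤ i ≤ n, q_i = ( Σ_{j=i}^{n} (−1)^{j−i} (∏_{k=j+1}^{n} a_k)(∏_{k=1}^{i−1} a_k) + Σ_{j=1}^{i−1} (−1)^{n+j−i} ∏_{k=j+1}^{i−1} a_k ) / D, where empty products equal 1, and set q_{n+1} = q_1. Then a_i q_i = 1 − q_{i+1} for every 1 ≤ i ≤ n. -/

import Mathlib

open Finset in
lemma loop_aux1 (a : ℕ → ℚ) (n i : ℕ) (hi : i + 1 < n) :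
    (a i) * ((∑ j ∈ Finset.Ico i n, (-1:ℚ)^(j-i) *
        ((∏ k ∈ Finset.Ico (j+1) n, a k) * ∏ k ∈ Finset.range i, a k)) +
      ∑ j ∈ Finset.range i, (-1:ℚ)^(n+j-i) * ∏ k ∈ Finset.Ico (j+1) i, a k)
    = ((∏ k ∈ Finset.range n, a k) + (-1)^(n+1))
      - ((∑ j ∈ Finset.Ico (i+1) n, (-1:ℚ)^(j-(i+1)) *
          ((∏ k ∈ Finset.Ico (j+1) n, a k) * ∏ k ∈ Finset.range (i+1), a k)) +
        ∑ j ∈ Finset.range (i+1), (-1:ℚ)^(n+j-(i+1)) * ∏ k ∈ Finset.Ico (j+1) (i+1), a k) := by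
  rw [Finset.sum_eq_sum_Ico_succ_bot (show i < n by omega)]
  rw [mul_add, mul_add]
  have hP : a i * ((-1:ℚ)^(i-i) * ((∏ k ∈ Finset.Ico (i+1) n, a k) * ∏ k ∈ Finset.range i, a k))
      = ∏ k ∈ Finset.range n, a k := by
    rw [Nat.sub_self, pow_zero, one_mul, ← Finset.prod_range_mul_prod_Ico a (show i+1 ≤ n by omega),
      Finset.prod_range_succ]
    ring
  have hA : a i * ∑ j ∈ Finset.Ico (i+1) n, (-1:ℚ)^(j-i) *
        ((∏ k ∈ Finset.Ico (j+1) n, a k) * ∏ k ∈ Finset.range i, a k)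
      = -∑ j ∈ Finset.Ico (i+1) n, (-1:ℚ)^(j-(i+1)) *
          ((∏ k ∈ Finset.Ico (j+1) n, a k) * ∏ k ∈ Finset.range (i+1), a k) := by
    rw [Finset.mul_sum, ← Finset.sum_neg_distrib]
    refine Finset.sum_congr rfl fun j hj => ?_
    simp only [Finset.mem_Ico] at hj
    have h1 : j - i = (j - (i+1)) + 1 := by omega
    rw [h1, pow_succ, Finset.prod_range_succ]
    ring
  have hB : a i * ∑ j ∈ Finset.range i, (-1:ℚ)^(n+j-i) * ∏ k ∈ Finset.Ico (j+1) i, a k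
      = -∑ j ∈ Finset.range i, (-1:ℚ)^(n+j-(i+1)) * ∏ k ∈ Finset.Ico (j+1) (i+1), a k := by
    rw [Finset.mul_sum, ← Finset.sum_neg_distrib]
    refine Finset.sum_congr rfl fun j hj => ?_
    simp only [Finset.mem_range] at hj
    have h1 : n + j - i = (n + j - (i+1)) + 1 := by omega
    rw [h1, pow_succ, Finset.prod_Ico_succ_top (show j+1 ≤ i by omega)]
    ring
  have hC : ∑ j ∈ Finset.range (i+1), (-1:ℚ)^(n+j-(i+1)) * ∏ k ∈ Finset.Ico (j+1) (i+1), a k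
      = (∑ j ∈ Finset.range i, (-1:ℚ)^(n+j-(i+1)) * ∏ k ∈ Finset.Ico (j+1) (i+1), a k)
        + (-1:ℚ)^(n-1) := by
    rw [Finset.sum_range_succ]
    have h1 : n + i - (i+1) = n - 1 := by omega
    rw [h1, Finset.Ico_self, Finset.prod_empty, mul_one]
  have hsign : ((-1:ℚ))^(n+1) = (-1:ℚ)^(n-1) := by
    have h1 : n + 1 = (n - 1) + 2 := by omega
    rw [h1, pow_add]
    ring
  linarith [hP, hA, hB, hC, hsign]

open Finset in
lemma loop_aux2 (a : ℕ → ℚ) (n i : ℕ) (h : i + 1 = n) :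
    (a i) * ((∑ j ∈ Finset.Ico i n, (-1:ℚ)^(j-i) *
        ((∏ k ∈ Finset.Ico (j+1) n, a k) * ∏ k ∈ Finset.range i, a k)) +
      ∑ j ∈ Finset.range i, (-1:ℚ)^(n+j-i) * ∏ k ∈ Finset.Ico (j+1) i, a k)
    = ((∏ k ∈ Finset.range n, a k) + (-1)^(n+1))
      - ((∑ j ∈ Finset.Ico 0 n, (-1:ℚ)^(j-0) *
          ((∏ k ∈ Finset.Ico (j+1) n, a k) * ∏ k ∈ Finset.range 0, a k)) +
        ∑ j ∈ Finset.range 0, (-1:ℚ)^(n+j-0) * ∏ k ∈ Finset.Ico (j+1) 0, a k) := by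
  subst h
  rw [Finset.sum_eq_sum_Ico_succ_bot (Nat.lt_succ_self i)]
  simp only [Finset.Ico_self, Finset.sum_empty, Finset.prod_empty, add_zero, Nat.sub_self,
    pow_zero, one_mul, mul_one, Finset.sum_range_zero, Finset.prod_range_zero,
    ← Finset.range_eq_Ico, Nat.sub_zero]
  rw [mul_add]
  have hP : a i * ∏ k ∈ Finset.range i, a k = ∏ k ∈ Finset.range (i+1), a k := by
    rw [Finset.prod_range_succ]; ring
  have hB : a i * ∑ j ∈ Finset.range i, (-1:ℚ)^(i+1+j-i) * ∏ k ∈ Finset.Ico (j+1) i, a k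
      = -∑ j ∈ Finset.range i, (-1:ℚ)^j * ∏ k ∈ Finset.Ico (j+1) (i+1), a k := by
    rw [Finset.mul_sum, ← Finset.sum_neg_distrib]
    refine Finset.sum_congr rfl fun j hj => ?_
    simp only [Finset.mem_range] at hj
    have h1 : i + 1 + j - i = j + 1 := by omega
    rw [h1, pow_succ, Finset.prod_Ico_succ_top (show j+1 ≤ i by omega)]
    ring
  have hC : ∑ j ∈ Finset.range (i+1), (-1:ℚ)^j * ∏ k ∈ Finset.Ico (j+1) (i+1), a k
      = (∑ j ∈ Finset.range i, (-1:ℚ)^j * ∏ k ∈ Finset.Ico (j+1) (i+1), a k) + (-1:ℚ)^i := by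
    rw [Finset.sum_range_succ]
    simp [Finset.Ico_self]
  have hsign : ((-1:ℚ))^(i+1+1) = (-1:ℚ)^i := by
    rw [pow_add]; ring
  linarith [hP, hB, hC, hsign]

/-- The loop weights
`q_i = (∑_{j=i}^{n} (−1)^{j−i} (∏_{k=j+1}^{n} a_k)(∏_{k=1}^{i−1} a_k)
      + ∑_{j=1}^{i−1} (−1)^{n+j−i} ∏_{k=j+1}^{i−1} a_k)/D`
with `D = ∏ a_k + (−1)^{n+1}` satisfy `a_i q_i = 1 − q_{i+1}`, where `q_{n+1} = q_1`.
Indices are `0`-based: `q i` is defined for `i < n` and the cyclic successor is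
`(i+1) % n`. -/
theorem loop_weights_recursion {n : ℕ} (hn : 2 ≤ n) (a : ℕ → ℕ)
    (ha : ∀ i < n, 2 ≤ a i)
    (D : ℚ) (hD : D = (∏ k ∈ Finset.range n, (a k : ℚ)) + (-1) ^ (n + 1))
    (q : ℕ → ℚ)
    (hq : ∀ i < n, q i =
      ((∑ j ∈ Finset.Ico i n, (-1 : ℚ) ^ (j - i) *
          ((∏ k ∈ Finset.Ico (j + 1) n, (a k : ℚ)) * ∏ k ∈ Finset.range i, (a k : ℚ))) +
        ∑ j ∈ Finset.range i, (-1 : ℚ) ^ (n + j - i) *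
          ∏ k ∈ Finset.Ico (j + 1) i, (a k : ℚ)) / D) :
    ∀ i < n, (a i : ℚ) * q i = 1 - q ((i + 1) % n) := by
  have hD0 : D ≠ 0 := by
    have h4 : (2:ℚ)^n ≤ ∏ k ∈ Finset.range n, (a k : ℚ) := by
      have := Finset.prod_le_prod (s := Finset.range n) (f := fun _ => (2:ℚ))
        (g := fun k => (a k : ℚ)) (fun k _ => by norm_num)
        (fun k hk => by simpa using (show (2:ℚ) ≤ (a k : ℚ) by exact_mod_cast ha k (Finset.mem_range.mp hk)))
      simpa using this
    have h5 : (4:ℚ) ≤ (2:ℚ)^n := by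
      calc (4:ℚ) = 2^2 := by norm_num
      _ ≤ 2^n := by exact pow_le_pow_right₀ (by norm_num) hn
    have hDpos : 0 < D := by
      rcases neg_one_pow_eq_or ℚ (n+1) with hs | hs <;> rw [hD, hs] <;> linarith
    exact ne_of_gt hDpos
  intro i hi
  rcases (show i + 1 < n ∨ i + 1 = n by omega) with h | h
  · have key := loop_aux1 (fun k => (a k : ℚ)) n i h
    rw [← hD] at key
    rw [hq i hi, Nat.mod_eq_of_lt h, hq (i+1) h, ← mul_div_assoc, key, sub_div,
      div_self hD0]
  · have key := loop_aux2 (fun k => (a k : ℚ)) n i h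
    rw [← hD] at key
    have h0 : (i + 1) % n = 0 := by rw [h, Nat.mod_self]
    rw [hq i hi, h0, hq 0 (by omega), ← mul_div_assoc, key, sub_div, div_self hD0]
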